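/- Padding separation for local LCS: let x, y be two symbols not occurring in strings U_1,...,U_N, V_1,...,V_N, each of length at most L. Define P_1 = U_1 x^L U_2 x^L ... U_N x^L and P_2 = V_1 y^L V_2 y^L ... V_N y^L. Then for any substrings S_1 of P_1 and S_2 of P_2, each of length at most L, LCS(S_1, S_2) ≤ max_{i,j} LCS(U_i, V_j); moreover this maximum is attained by some pair of substrings of length at most L (namely S_1 = U_i, S_2 = V_j for the maximizing pair). -/

import Mathlib

/-- Length of a longest common subsequence of two lists. -/
noncomputable def lcs {α : Type*} (x y : List α) : ℕ :=
  sSup {n | ∃ z : List α, z.Sublist x ∧ z.Sublist y ∧ z.length = n}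

/-- The padded concatenation `U₁ x^L U₂ x^L ⋯ U_N x^L`. -/
def padded {α : Type*} (N L : ℕ) (x : α) (U : ℕ → List α) : List α :=
  ((List.range N).map fun i => U i ++ List.replicate L x).flatten

lemma le_lcs_aux {α : Type*} {u v z : List α} (h1 : z.Sublist u) (h2 : z.Sublist v) :
    z.length ≤ lcs u v := by
  have hb : BddAbove {n | ∃ w : List α, w.Sublist u ∧ w.Sublist v ∧ w.length = n} := by
    refine ⟨u.length, ?_⟩
    rintro n ⟨w, hw1, -, rfl⟩
    exact hw1.length_le
  exact le_csSup hb ⟨z, h1, h2, rfl⟩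

lemma lcs_le_aux {α : Type*} {u v : List α} {m : ℕ}
    (h : ∀ z : List α, z.Sublist u → z.Sublist v → z.length ≤ m) : lcs u v ≤ m := by
  have hne : {n | ∃ z : List α, z.Sublist u ∧ z.Sublist v ∧ z.length = n}.Nonempty :=
    ⟨0, [], List.nil_sublist _, List.nil_sublist _, rfl⟩
  apply csSup_le hne
  rintro n ⟨z, h1, h2, hl⟩
  exact hl ▸ h z h1 h2

/-- Key structural lemma: a short infix of a padded flatten has its non-`x`
symbols all inside a single block. -/
lemma key_aux {α : Type*} [DecidableEq α] (L : ℕ) (x : α) :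
    ∀ (us : List (List α)) (S : List α),
      S <:+: (us.map (· ++ List.replicate L x)).flatten → S.length ≤ L →
      S.filter (· ≠ x) = [] ∨ ∃ u ∈ us, (S.filter (· ≠ x)).Sublist u := by
  intro us
  induction us with
  | nil =>
    intro S h _
    left
    simp only [List.map_nil, List.flatten_nil, List.infix_nil] at h
    simp [h]
  | cons u rest ih =>
    intro S h hL
    rw [List.map_cons, List.flatten_cons] at h
    obtain ⟨s, t, hst⟩ := h
    generalize hTdef : (rest.map (· ++ List.replicate L x)).flatten = T at hst ih
    have hlen := congrArg List.length hst
    simp only [List.length_append, List.length_replicate] at hlen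
    rcases le_or_gt (s.length + S.length) (u.length + L) with hc1 | hc1
    · -- S lies inside the first block
      have hpre : s ++ S <+: (u ++ List.replicate L x) ++ T := ⟨t, hst⟩
      have hpre2 : s ++ S <+: u ++ List.replicate L x :=
        List.prefix_of_prefix_length_le hpre ((u ++ List.replicate L x).prefix_append T)
          (by simp only [List.length_append, List.length_replicate]; omega)
      have hSA : S.Sublist (u ++ List.replicate L x) :=
        (List.sublist_append_right s S).trans hpre2.sublist
      have hsub : (S.filter (· ≠ x)).Sublist ((u ++ List.replicate L x).filter (· ≠ x)) :=
        hSA.filter _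
      have hAf : (u ++ List.replicate L x).filter (· ≠ x) = u.filter (· ≠ x) := by
        simp [List.filter_append, List.filter_replicate]
      exact Or.inr ⟨u, List.mem_cons_self (a := u) (l := rest),
        (hAf ▸ hsub).trans (List.filter_sublist (l := u))⟩
    · rcases le_or_gt (u.length + L) s.length with hc2 | hc2
      · -- S lies inside the tail T
        have hsuf : S ++ t <:+ (u ++ List.replicate L x) ++ T :=
          ⟨s, by rw [← List.append_assoc]; exact hst⟩
        have hsuf2 : S ++ t <:+ T := by
          apply List.suffix_of_suffix_length_le hsuf
            (List.suffix_append (u ++ List.replicate L x) T)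
          simp only [List.length_append]; omega
        have hinf : S <:+: T := (S.prefix_append t).isInfix.trans hsuf2.isInfix
        rcases ih S hinf hL with h0 | ⟨u', hu', hsub⟩
        · exact Or.inl h0
        · exact Or.inr ⟨u', List.mem_cons_of_mem _ hu', hsub⟩
      · -- S straddles the boundary
        rcases lt_or_ge s.length u.length with hc3 | hc3
        · omega
        · have hdrop : S ++ t = List.replicate (L - (s.length - u.length)) x ++ T := by
            have h1 := congrArg (List.drop s.length) hst
            rw [show s ++ S ++ t = s ++ (S ++ t) from List.append_assoc s S t,
              List.drop_left, List.append_assoc, List.drop_append,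
              List.drop_eq_nil_of_le hc3,
              List.drop_append_of_le_length
                (by simp only [List.length_replicate]; omega),
              List.drop_replicate, List.nil_append] at h1
            exact h1
          have hS : S = ((List.replicate (L - (s.length - u.length)) x) ++ T).take S.length := by
            have h2 := congrArg (List.take S.length) hdrop
            rwa [List.take_left] at h2
          have hfil : S.filter (· ≠ x) =
              (T.take (S.length - (L - (s.length - u.length)))).filter (· ≠ x) := by
            conv_lhs => rw [hS]
            rw [List.take_append, List.take_replicate,
              List.filter_append, List.filter_replicate, List.length_replicate]
            simp
          have hinf : T.take (S.length - (L - (s.length - u.length))) <:+: T :=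
            (List.take_prefix _ _).isInfix
          have hlen2 : (T.take (S.length - (L - (s.length - u.length)))).length ≤ L := by
            have := List.length_take_le (S.length - (L - (s.length - u.length))) T
            omega
          rcases ih _ hinf hlen2 with h0 | ⟨u', hu', hsub⟩
          · exact Or.inl (hfil ▸ h0)
          · exact Or.inr ⟨u', List.mem_cons_of_mem _ hu', hfil ▸ hsub⟩

lemma mem_padded_aux {α : Type*} {N L : ℕ} {y a : α} {V : ℕ → List α}
    (ha : a ∈ padded N L y V) : (∃ j < N, a ∈ V j) ∨ a = y := by
  rw [padded, List.mem_flatten] at ha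
  obtain ⟨l, hl, hal⟩ := ha
  simp only [List.mem_map, List.mem_range] at hl
  obtain ⟨j, hj, rfl⟩ := hl
  rcases List.mem_append.1 hal with h | h
  · exact Or.inl ⟨j, hj, h⟩
  · exact Or.inr (List.eq_of_mem_replicate h)

/-- padding separation for local LCS.  If `x, y` are distinct
symbols not occurring in the blocks `U₁,…,U_N, V₁,…,V_N` (each of length at
most `L`), then for `P₁ = U₁ x^L ⋯ U_N x^L` and `P₂ = V₁ y^L ⋯ V_N y^L`, any
substrings `S₁ ⊆ P₁`, `S₂ ⊆ P₂` of length at most `L` satisfy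
`LCS(S₁,S₂) ≤ max_{i,j} LCS(U_i, V_j)`, and this maximum is attained by the
pair of substrings `S₁ = U_i`, `S₂ = V_j` (of length at most `L`) for a
maximizing pair `(i,j)`. -/
theorem padding_separation {α : Type*} (N L : ℕ) (hN : 0 < N) (x y : α)
    (hxy : x ≠ y) (U V : ℕ → List α)
    (hU : ∀ i < N, (U i).length ≤ L ∧ x ∉ U i ∧ y ∉ U i)
    (hV : ∀ j < N, (V j).length ≤ L ∧ x ∉ V j ∧ y ∉ V j) :
    (∀ S₁ S₂ : List α, S₁ <:+: padded N L x U → S₂ <:+: padded N L y V →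
      S₁.length ≤ L → S₂.length ≤ L →
      lcs S₁ S₂ ≤ (Finset.range N ×ˢ Finset.range N).sup fun p => lcs (U p.1) (V p.2)) ∧
    (∃ i < N, ∃ j < N, U i <:+: padded N L x U ∧ V j <:+: padded N L y V ∧
      (U i).length ≤ L ∧ (V j).length ≤ L ∧
      lcs (U i) (V j) =
        (Finset.range N ×ˢ Finset.range N).sup fun p => lcs (U p.1) (V p.2)) := by
  classical
  have hinfU : ∀ i < N, U i <:+: padded N L x U := by
    intro i hi
    have hmem : U i ++ List.replicate L x ∈
        (List.range N).map fun i => U i ++ List.replicate L x :=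
      List.mem_map.2 ⟨i, List.mem_range.2 hi, rfl⟩
    exact ((U i).prefix_append _).isInfix.trans (List.infix_of_mem_flatten hmem)
  have hinfV : ∀ j < N, V j <:+: padded N L y V := by
    intro j hj
    have hmem : V j ++ List.replicate L y ∈
        (List.range N).map fun j => V j ++ List.replicate L y :=
      List.mem_map.2 ⟨j, List.mem_range.2 hj, rfl⟩
    exact ((V j).prefix_append _).isInfix.trans (List.infix_of_mem_flatten hmem)
  constructor
  · intro S₁ S₂ h1 h2 hl1 hl2
    apply lcs_le_aux
    intro z hz1 hz2
    -- z contains no x and no y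
    have hxS₂ : x ∉ S₂ := by
      intro hx
      have hxp : x ∈ padded N L y V := h2.sublist.subset hx
      rcases mem_padded_aux hxp with ⟨j, hj, hmem⟩ | heq
      · exact (hV j hj).2.1 hmem
      · exact hxy heq
    have hyS₁ : y ∉ S₁ := by
      intro hy
      have hyp : y ∈ padded N L x U := h1.sublist.subset hy
      rcases mem_padded_aux hyp with ⟨i, hi, hmem⟩ | heq
      · exact (hU i hi).2.2 hmem
      · exact hxy heq.symm
    have hz1' : z.Sublist (S₁.filter (· ≠ x)) := by
      have hzz : z.filter (· ≠ x) = z :=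
        List.filter_eq_self.2 (fun a ha => by
          simp only [ne_eq, decide_eq_true_eq]
          rintro rfl
          exact hxS₂ (hz2.subset ha))
      exact hzz ▸ (hz1.filter _)
    have hz2' : z.Sublist (S₂.filter (· ≠ y)) := by
      have hzz : z.filter (· ≠ y) = z :=
        List.filter_eq_self.2 (fun a ha => by
          simp only [ne_eq, decide_eq_true_eq]
          rintro rfl
          exact hyS₁ (hz1.subset ha))
      exact hzz ▸ (hz2.filter _)
    -- apply the key lemma on both sides
    have hp1 : S₁ <:+: (((List.range N).map U).map (· ++ List.replicate L x)).flatten := by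
      simpa [padded, List.map_map, Function.comp_def] using h1
    have hp2 : S₂ <:+: (((List.range N).map V).map (· ++ List.replicate L y)).flatten := by
      simpa [padded, List.map_map, Function.comp_def] using h2
    rcases key_aux L x _ S₁ hp1 hl1 with hnil1 | ⟨u, hu, hsub1⟩
    · have : z = [] := List.sublist_nil.1 (hnil1 ▸ hz1')
      simp [this]
    rcases key_aux L y _ S₂ hp2 hl2 with hnil2 | ⟨v, hv, hsub2⟩
    · have : z = [] := List.sublist_nil.1 (hnil2 ▸ hz2')
      simp [this]
    obtain ⟨i, hi, rfl⟩ := List.mem_map.1 hu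
    obtain ⟨j, hj, rfl⟩ := List.mem_map.1 hv
    rw [List.mem_range] at hi hj
    have hzi : z.Sublist (U i) := hz1'.trans hsub1
    have hzj : z.Sublist (V j) := hz2'.trans hsub2
    calc z.length ≤ lcs (U i) (V j) := le_lcs_aux hzi hzj
      _ ≤ (Finset.range N ×ˢ Finset.range N).sup fun p => lcs (U p.1) (V p.2) :=
          Finset.le_sup (f := fun p => lcs (U p.1) (V p.2))
            (show ((i, j) : ℕ × ℕ) ∈ Finset.range N ×ˢ Finset.range N from
              Finset.mem_product.2 ⟨Finset.mem_range.2 hi, Finset.mem_range.2 hj⟩)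
  · have hne : (Finset.range N ×ˢ Finset.range N).Nonempty :=
      Finset.Nonempty.product ⟨0, Finset.mem_range.2 hN⟩ ⟨0, Finset.mem_range.2 hN⟩
    obtain ⟨⟨i, j⟩, hmem, hsup⟩ :=
      Finset.exists_mem_eq_sup _ hne (fun p => lcs (U p.1) (V p.2))
    rw [Finset.mem_product, Finset.mem_range, Finset.mem_range] at hmem
    exact ⟨i, hmem.1, j, hmem.2, hinfU i hmem.1, hinfV j hmem.2,
      (hU i hmem.1).1, (hV j hmem.2).1, hsup.symm⟩
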